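/- Let k be a non-negative integer, P a finite propositional logic program, and U a model of the theory T₀(P) with |M(U)| ≤ k. Then i_U ≤ k, where i_U = max{i_q : q ∈ M(U)} and i_q is the unique i with c(q,i) ∈ U. -/
import Mathlib


open scoped Classical

noncomputable section

/-- A propositional logic program rule: a head atom, a finite positive body and a
finite negative body. -/
structure LPRule (α : Type) where
  head : α
  pos : Finset α
  neg : Finset α
deriving DecidableEq

/-- A logic program is a finite set of rules. -/
abbrev LProgram (α : Type) := Finset (LPRule α)

variable {α : Type} [DecidableEq α]

/-- `horn r`: the Horn rule with the same head and positive body as `r`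
and empty negative body. -/
def LPRule.horn (r : LPRule α) : LPRule α := ⟨r.head, r.pos, ∅⟩

/-- A rule `r` is proper if `h(r) ∉ b⁺(r)` and `b⁺(r) ∩ b⁻(r) = ∅`. -/
def LPRule.proper (r : LPRule α) : Prop := r.head ∉ r.pos ∧ r.pos ∩ r.neg = ∅

/-- `At(P)`: the set of atoms occurring in `P`. -/
def atomsP (P : LProgram α) : Finset α := P.sup (fun r => insert r.head (r.pos ∪ r.neg))

/-- `h(P)`: the set of heads of rules of `P`. -/
def headsP (P : LProgram α) : Finset α := P.image LPRule.head

/-- `Neg(P)`: the set of atoms occurring negated in `P`. -/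
def negP (P : LProgram α) : Finset α := P.sup LPRule.neg

/-- The least model of a (Horn) program `Q`, given as a set of rules (negative bodies
are ignored; Horn rules have empty negative bodies): the least set `M` of atoms such
that `h(r) ∈ M` whenever `r ∈ Q` and `b⁺(r) ⊆ M`. -/
def LM (Q : Set (LPRule α)) : Set α :=
  ⋂₀ {M : Set α | ∀ r ∈ Q, (↑r.pos : Set α) ⊆ M → r.head ∈ M}

/-- The reduct `P^S`: delete every rule whose negative body meets `S` and remove the
negative bodies of the remaining rules. -/
def reduct (P : LProgram α) (S : Set α) : Set (LPRule α) :=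
  LPRule.horn '' {r | r ∈ P ∧ (↑r.neg : Set α) ∩ S = ∅}

/-- `M` is a stable model of `P` if `M = LM (P^M)`. -/
def isStable (P : LProgram α) (M : Set α) : Prop :=
  M = LM (reduct P M)

/-- The propositional atoms of the encoding `T(P)`: for each program atom `q`,
atoms `c(q)`, `c(q,i)`, `c⁻(q,i)` and `d(q,i)`. -/
inductive EncAtom (α : Type) where
  | c : α → EncAtom α
  | ci : α → ℕ → EncAtom α
  | cm : α → ℕ → EncAtom α
  | d : α → ℕ → EncAtom α
deriving DecidableEq

/-- `U` satisfies `F₁(q,i) = c⁻(q,i) ↔ (c(q,1) ∨ … ∨ c(q,i-1))`. -/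
def SatF1 (U : Set (EncAtom α)) (q : α) (i : ℕ) : Prop :=
  EncAtom.cm q i ∈ U ↔ ∃ j, 1 ≤ j ∧ j ≤ i - 1 ∧ EncAtom.ci q j ∈ U

/-- `U` satisfies `F₂(q) = c(q) ↔ (c(q,1) ∨ … ∨ c(q,k+1))`. -/
def SatF2 (k : ℕ) (U : Set (EncAtom α)) (q : α) : Prop :=
  EncAtom.c q ∈ U ↔ ∃ j, 1 ≤ j ∧ j ≤ k + 1 ∧ EncAtom.ci q j ∈ U

/-- `U` satisfies `F₃(r,i)`; for `i ≥ 2` this is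
`c⁻(a₁,i) ∧ … ∧ c⁻(a_s,i) ∧ ¬c(b₁) ∧ … ∧ ¬c(b_t) ∧ ¬c⁻(q,i)`, for `i = 1` it is
`false` when `b⁺(r) ≠ ∅` and `¬c(b₁) ∧ … ∧ ¬c(b_t)` when `b⁺(r) = ∅`. -/
def SatF3 (U : Set (EncAtom α)) (r : LPRule α) (i : ℕ) : Prop :=
  if i = 1 then r.pos = ∅ ∧ ∀ b ∈ r.neg, EncAtom.c b ∉ U
  else (∀ a ∈ r.pos, EncAtom.cm a i ∈ U) ∧ (∀ b ∈ r.neg, EncAtom.c b ∉ U) ∧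
    EncAtom.cm r.head i ∉ U

/-- `U` satisfies `F₄(q,i) = c(q,i) ↔ (F₃(r₁,i) ∨ … ∨ F₃(r_v,i))`, where
`r₁,…,r_v` are all rules of `P` with head `q`. -/
def SatF4 (P : LProgram α) (U : Set (EncAtom α)) (q : α) (i : ℕ) : Prop :=
  EncAtom.ci q i ∈ U ↔ ∃ r ∈ P, r.head = q ∧ SatF3 U r i

/-- `U` is a model of the theory `T₀(P)`. -/
def ModelT0 (k : ℕ) (P : LProgram α) (U : Set (EncAtom α)) : Prop :=
  (∀ q ∈ atomsP P, ∀ i, 2 ≤ i → i ≤ k + 1 → SatF1 U q i) ∧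
  (∀ q ∈ atomsP P, SatF2 k U q) ∧
  (∀ q ∈ atomsP P, ∀ i, 1 ≤ i → i ≤ k + 1 → SatF4 P U q i)

/-- `M(U) = {q ∈ At(P) : c(q) ∈ U}`. -/
def MU (P : LProgram α) (U : Set (EncAtom α)) : Finset α :=
  (atomsP P).filter (fun q => EncAtom.c q ∈ U)

lemma mem_atomsP_of_pos {P : LProgram α} {r : LPRule α} (hr : r ∈ P) {a : α}
    (ha : a ∈ r.pos) : a ∈ atomsP P := by
  simp only [atomsP, Finset.mem_sup]
  exact ⟨r, hr, by simp [ha]⟩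

lemma ci_lt_false (k : ℕ) (P : LProgram α) (U : Set (EncAtom α)) (hU : ModelT0 k P U)
    {q : α} (hq : q ∈ atomsP P) {i j : ℕ} (hij : i < j) (hi1 : 1 ≤ i) (hjk : j ≤ k+1)
    (hci : EncAtom.ci q i ∈ U) (hcj : EncAtom.ci q j ∈ U) : False := by
  obtain ⟨h1, _, h4⟩ := hU
  obtain ⟨r, hrP, hrh, hs3⟩ := (h4 q hq j (by omega) hjk).1 hcj
  rw [SatF3, if_neg (by omega : j ≠ 1)] at hs3
  exact (hrh ▸ hs3.2.2) ((h1 q hq j (by omega) hjk).2 ⟨i, hi1, by omega, hci⟩)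

lemma ci_unique (k : ℕ) (P : LProgram α) (U : Set (EncAtom α)) (hU : ModelT0 k P U)
    {q : α} (hq : q ∈ atomsP P) {i j : ℕ} (hi1 : 1 ≤ i) (hik : i ≤ k+1)
    (hj1 : 1 ≤ j) (hjk : j ≤ k+1)
    (hci : EncAtom.ci q i ∈ U) (hcj : EncAtom.ci q j ∈ U) : i = j := by
  rcases lt_trichotomy i j with h | h | h
  · exact (ci_lt_false k P U hU hq h hi1 hjk hci hcj).elim
  · exact h
  · exact (ci_lt_false k P U hU hq h hj1 hik hcj hci).elim

lemma descent (k : ℕ) (P : LProgram α) (U : Set (EncAtom α)) (hU : ModelT0 k P U)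
    {q : α} (hq : q ∈ atomsP P) {m : ℕ} (hm2 : 2 ≤ m) (hmk : m ≤ k + 1)
    (hci : EncAtom.ci q m ∈ U) :
    ∃ a ∈ atomsP P, EncAtom.ci a (m - 1) ∈ U := by
  obtain ⟨h1, h2, h4⟩ := hU
  obtain ⟨r, hrP, hrh, hs3⟩ := (h4 q hq m (by omega) hmk).1 hci
  rw [SatF3, if_neg (by omega : m ≠ 1)] at hs3
  obtain ⟨Hpos, Hneg, Hcm⟩ := hs3
  rw [hrh] at Hcm
  have hnolow : ∀ j, 1 ≤ j → j ≤ m - 1 → EncAtom.ci q j ∉ U := by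
    intro j hj1 hjm hcj
    exact Hcm ((h1 q hq m hm2 hmk).2 ⟨j, hj1, hjm, hcj⟩)
  have hq1 : EncAtom.ci q (m - 1) ∉ U := hnolow (m - 1) (by omega) le_rfl
  have hnS3 : ¬ SatF3 U r (m - 1) := by
    intro h
    exact hq1 ((h4 q hq (m - 1) (by omega) (by omega)).2 ⟨r, hrP, hrh, h⟩)
  rcases Nat.lt_or_ge m 3 with hm3 | hm3
  · -- m = 2
    have hm : m = 2 := by omega
    subst hm
    rw [SatF3, if_pos rfl] at hnS3
    push_neg at hnS3
    have hne : r.pos.Nonempty := by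
      rcases Finset.eq_empty_or_nonempty r.pos with he | hne
      · obtain ⟨b, hb, hcb⟩ := hnS3 he
        exact (Hneg b hb hcb).elim
      · exact hne
    obtain ⟨a, ha⟩ := hne
    have hcma : EncAtom.cm a 2 ∈ U := Hpos a ha
    have haat : a ∈ atomsP P := mem_atomsP_of_pos hrP ha
    obtain ⟨j, hj1, hj2, hcia⟩ := (h1 a haat 2 le_rfl (by omega)).1 hcma
    have : j = 1 := by omega
    subst this
    exact ⟨a, haat, hcia⟩
  · -- m ≥ 3
    rw [SatF3, if_neg (by omega : m - 1 ≠ 1)] at hnS3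
    have hcmq : EncAtom.cm q (m - 1) ∉ U := by
      intro h
      obtain ⟨j, hj1, hj2, hcj⟩ := (h1 q hq (m - 1) (by omega) (by omega)).1 h
      exact hnolow j hj1 (by omega) hcj
    obtain ⟨a, ha, hcma⟩ : ∃ a ∈ r.pos, EncAtom.cm a (m - 1) ∉ U := by
      by_contra hc
      push_neg at hc
      exact hnS3 ⟨hc, Hneg, hrh ▸ hcmq⟩
    have haat : a ∈ atomsP P := mem_atomsP_of_pos hrP ha
    obtain ⟨j, hj1, hj2, hcia⟩ := (h1 a haat m hm2 hmk).1 (Hpos a ha)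
    have hj : j = m - 1 := by
      by_contra hne
      exact hcma ((h1 a haat (m - 1) (by omega) (by omega)).2 ⟨j, hj1, by omega, hcia⟩)
    subst hj
    exact ⟨a, haat, hcia⟩

/-- let `U` be a model of `T₀(P)` with `|M(U)| ≤ k` and, for `q ∈ M(U)`,
let `iq q` be the unique `i` with `1 ≤ i ≤ k+1` and `c(q,i) ∈ U`.  Then
`i_U = max {iq q : q ∈ M(U)} ≤ k`. -/
theorem levels_le (k : ℕ) (P : LProgram α) (U : Set (EncAtom α))
    (hU : ModelT0 k P U) (hcard : (MU P U).card ≤ k) (iq : α → ℕ)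
    (hiq : ∀ q ∈ MU P U, 1 ≤ iq q ∧ iq q ≤ k + 1 ∧ EncAtom.ci q (iq q) ∈ U) :
    ∀ q ∈ MU P U, iq q ≤ k := by
  intro q hq
  by_contra hgt
  push_neg at hgt
  obtain ⟨hq1, hqk, hqci⟩ := hiq q hq
  have hqeq : iq q = k + 1 := by omega
  -- there is an atom in MU at every level k+1-j, j ≤ k
  have key : ∀ j, j ≤ k → ∃ a ∈ MU P U, iq a = k + 1 - j := by
    intro j
    induction j with
    | zero => exact fun _ => ⟨q, hq, by omega⟩
    | succ n ih =>
      intro hn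
      obtain ⟨a, haMU, halv⟩ := ih (by omega)
      obtain ⟨ha1, hak, haci⟩ := hiq a haMU
      have haat : a ∈ atomsP P := (Finset.mem_filter.1 haMU).1
      rw [halv] at haci
      obtain ⟨b, hbat, hbci⟩ := descent k P U hU haat (by omega) (by omega) haci
      have hblev : k + 1 - n - 1 = k + 1 - (n + 1) := by omega
      rw [hblev] at hbci
      have hbc : EncAtom.c b ∈ U :=
        (hU.2.1 b hbat).2 ⟨k + 1 - (n + 1), by omega, by omega, hbci⟩
      have hbMU : b ∈ MU P U := Finset.mem_filter.2 ⟨hbat, hbc⟩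
      obtain ⟨hb1, hbk, hbci'⟩ := hiq b hbMU
      exact ⟨b, hbMU, ci_unique k P U hU hbat hb1 hbk (by omega) (by omega) hbci' hbci⟩
  have hsub : Finset.Icc 1 (k + 1) ⊆ (MU P U).image iq := by
    intro i hi
    simp only [Finset.mem_Icc] at hi
    obtain ⟨a, haMU, halv⟩ := key (k + 1 - i) (by omega)
    exact Finset.mem_image.2 ⟨a, haMU, by omega⟩
  have h1 : (Finset.Icc 1 (k + 1)).card ≤ ((MU P U).image iq).card :=
    Finset.card_le_card hsub
  rw [Nat.card_Icc] at h1
  have h2 : ((MU P U).image iq).card ≤ (MU P U).card := Finset.card_image_le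
  omega
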